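/- Let h be the Heaviside function (indicator of [0,∞)) and F ∈ L²(ℝ, H) for a Hilbert space H with |∂_t|^{1/4}F ∈ L²(ℝ, H). Then ‖|∂_t|^{1/4}(hF)‖_{L²(ℝ,H)} ≲ ‖|∂_t|^{1/4}F‖_{L²(ℝ,H)}, i.e. multiplication by the Heaviside function is bounded on the homogeneous Sobolev space Ḣ^{1/4}(ℝ; H) (intersected with L²). -/

import Mathlib

open MeasureTheory Complex Real
open scoped ENNReal

noncomputable section

/-- The squared homogeneous `Ḣ^{1/4}(ℝ; H)` seminorm, via the double-integral
characterization `‖u‖²_{Ḣ^{1/4}} = c ∫∫ ‖u(t)−u(s)‖²_H / |t−s|^{3/2} dt ds`. -/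
def sobQuarterSq {H : Type*} [NormedAddCommGroup H] (u : ℝ → H) : ℝ≥0∞ :=
  ∫⁻ t : ℝ, ∫⁻ s : ℝ,
    (‖u t - u s‖₊ : ℝ≥0∞) ^ 2 / (ENNReal.ofReal |t - s|) ^ ((3 : ℝ) / 2)

namespace Statement10Proof

open Set

variable {H : Type*} [NormedAddCommGroup H]

private lemma sq_triangle (a b : H) :
    (‖a‖₊ : ℝ≥0∞) ^ 2 ≤ 2 * (‖a - b‖₊ : ℝ≥0∞) ^ 2 + 2 * (‖b‖₊ : ℝ≥0∞) ^ 2 := by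
  have h1 : ‖a‖ ≤ ‖a - b‖ + ‖b‖ := by
    calc ‖a‖ = ‖a - b + b‖ := by rw [sub_add_cancel]
    _ ≤ _ := norm_add_le _ _
  have h : ‖a‖ ^ 2 ≤ 2 * ‖a - b‖ ^ 2 + 2 * ‖b‖ ^ 2 := by
    nlinarith [norm_nonneg a, norm_nonneg (a - b), norm_nonneg b,
      sq_nonneg (‖a - b‖ - ‖b‖), sq_nonneg (‖a - b‖ + ‖b‖)]
  calc (‖a‖₊ : ℝ≥0∞) ^ 2 = ENNReal.ofReal (‖a‖ ^ 2) := by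
        rw [ENNReal.ofReal_pow (norm_nonneg _), ofReal_norm, enorm_eq_nnnorm]
    _ ≤ ENNReal.ofReal (2 * ‖a - b‖ ^ 2 + 2 * ‖b‖ ^ 2) := ENNReal.ofReal_le_ofReal h
    _ ≤ _ := by
        rw [ENNReal.ofReal_add (by positivity) (by positivity),
          ENNReal.ofReal_mul (by norm_num), ENNReal.ofReal_mul (by norm_num),
          ENNReal.ofReal_pow (norm_nonneg _), ENNReal.ofReal_pow (norm_nonneg _),
          ofReal_norm, ofReal_norm, enorm_eq_nnnorm, enorm_eq_nnnorm, ENNReal.ofReal_ofNat]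

private lemma sobQuarterSq_congr {u v : ℝ → H} (h : u =ᵐ[volume] v) :
    sobQuarterSq u = sobQuarterSq v := by
  unfold sobQuarterSq
  refine lintegral_congr_ae ?_
  filter_upwards [h] with t ht
  refine lintegral_congr_ae ?_
  filter_upwards [h] with s hs
  rw [ht, hs]

/-- integral of `15⁻¹ t^{-3/2}` over `[s/16, s]`. -/
private lemma icc_c_integral {s : ℝ} (hs : 0 < s) :
    ∫⁻ t in Icc (s / 16) s, ENNReal.ofReal (15⁻¹ * t ^ (-3/2 : ℝ))
      = ENNReal.ofReal (2 / 5 * s ^ (-1/2 : ℝ)) := by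
  have h16 : 0 < s / 16 := by positivity
  have hcont : ContinuousOn (fun t : ℝ => 15⁻¹ * t ^ (-3/2 : ℝ)) (Icc (s / 16) s) := by
    refine continuousOn_const.mul (fun t ht => ContinuousAt.continuousWithinAt ?_)
    exact Real.continuousAt_rpow_const t _ (Or.inl (lt_of_lt_of_le h16 ht.1).ne')
  have hint : IntegrableOn (fun t : ℝ => 15⁻¹ * t ^ (-3/2 : ℝ)) (Icc (s / 16) s) :=
    hcont.integrableOn_Icc
  rw [← ofReal_integral_eq_lintegral_ofReal hint
      ((ae_restrict_iff' measurableSet_Icc).2 (ae_of_all _ fun t ht => by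
        have ht0 : 0 < t := lt_of_lt_of_le h16 ht.1
        positivity))]
  congr 1
  rw [MeasureTheory.integral_Icc_eq_integral_Ioc,
    ← intervalIntegral.integral_of_le (by linarith : s / 16 ≤ s),
    intervalIntegral.integral_const_mul,
    integral_rpow (Or.inr ⟨by norm_num, by
      simp only [Set.mem_uIcc]; push_neg
      constructor <;> intro h <;> nlinarith⟩)]
  have h4 : (s / 16 : ℝ) ^ (-1/2 : ℝ) = 4 * s ^ (-1/2 : ℝ) := by
    rw [div_eq_mul_inv, Real.mul_rpow hs.le (by norm_num)]
    have h16' : ((16 : ℝ)⁻¹) ^ (-1/2 : ℝ) = 4 := by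
      have h2 : ((16 : ℝ)⁻¹) = (4 : ℝ) ^ (-2 : ℝ) := by
        rw [Real.rpow_neg (by norm_num), show ((4 : ℝ) ^ (2 : ℝ)) = 16 from by
          rw [show (2 : ℝ) = ((2 : ℕ) : ℝ) by norm_num, Real.rpow_natCast]; norm_num]
      rw [h2, ← Real.rpow_mul (by norm_num)]; norm_num
    rw [h16']; ring
  rw [show (-3/2 + 1 : ℝ) = -1/2 by norm_num, h4]
  ring

private def Df (F : ℝ → H) (t : ℝ) : ℝ≥0∞ := (‖F t‖₊ : ℝ≥0∞) ^ 2

private def kk (t s : ℝ) : ℝ≥0∞ := (ENNReal.ofReal |t - s|) ^ ((3 : ℝ) / 2)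

private def cc (t : ℝ) : ℝ≥0∞ := ENNReal.ofReal (15⁻¹ * t ^ (-3/2 : ℝ))

private def ww (t : ℝ) : ℝ≥0∞ := ENNReal.ofReal (t ^ (-1/2 : ℝ))

private def q1 (F : ℝ → H) (t s : ℝ) : ℝ≥0∞ :=
  if t < s ∧ s ≤ 16 * t then 2 * (‖F t - F s‖₊ : ℝ≥0∞) ^ 2 * cc t else 0

private def q2 (F : ℝ → H) (t s : ℝ) : ℝ≥0∞ :=
  if t < s ∧ s ≤ 16 * t then 2 * Df F s * cc t else 0

private lemma sob_eq (F : ℝ → H) :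
    sobQuarterSq F = ∫⁻ t, ∫⁻ s, (‖F t - F s‖₊ : ℝ≥0∞) ^ 2 / kk t s := rfl

private lemma meas_Df {F : ℝ → H} (hFm : StronglyMeasurable F) : Measurable (Df F) :=
  hFm.enorm.pow_const 2

private lemma meas_dsq {F : ℝ → H} (hFm : StronglyMeasurable F) :
    Measurable (fun p : ℝ × ℝ => (‖F p.1 - F p.2‖₊ : ℝ≥0∞) ^ 2) :=
  (((hFm.comp_measurable measurable_fst).sub
    (hFm.comp_measurable measurable_snd)).enorm).pow_const 2

private lemma meas_kk : Measurable (fun p : ℝ × ℝ => kk p.1 p.2) := by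
  unfold kk; fun_prop

private lemma meas_cc : Measurable cc := by
  unfold cc; fun_prop

private lemma kk_ne_top {t s : ℝ} : kk t s ≠ ∞ :=
  ENNReal.rpow_ne_top_of_nonneg (by norm_num) ENNReal.ofReal_ne_top

private lemma cc_ne_top {t : ℝ} : cc t ≠ ∞ := ENNReal.ofReal_ne_top

/-- pointwise averaging estimate -/
private lemma step_pt {F : ℝ → H} (hFm : StronglyMeasurable F) {ε t : ℝ}
    (hε : 0 < ε) (ht : ε < t) :
    Df F t * ww t ≤ (∫⁻ s, q1 F t s) + ∫⁻ s, q2 F t s := by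
  have ht0 : 0 < t := hε.trans ht
  have hvol : volume (Ioc t (16 * t)) = ENNReal.ofReal (15 * t) := by
    rw [Real.volume_Ioc]; ring_nf
  have h0 : Df F t * ENNReal.ofReal (15 * t) = ∫⁻ _ in Ioc t (16 * t), Df F t := by
    rw [setLIntegral_const, hvol]
  have h1 : ∫⁻ _ in Ioc t (16 * t), Df F t
      ≤ ∫⁻ s in Ioc t (16 * t), (2 * (‖F t - F s‖₊ : ℝ≥0∞) ^ 2 + 2 * Df F s) :=
    setLIntegral_mono' measurableSet_Ioc (fun s _ => sq_triangle (F t) (F s))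
  have h2 : Df F t * ww t = (Df F t * ENNReal.ofReal (15 * t)) * cc t := by
    rw [mul_assoc]
    congr 1
    unfold ww cc
    rw [← ENNReal.ofReal_mul (by positivity)]
    congr 1
    rw [show (15 * t) * (15⁻¹ * t ^ (-3/2 : ℝ)) = t * t ^ (-3/2 : ℝ) by ring,
      show (-1/2 : ℝ) = 1 + (-3/2) by norm_num, Real.rpow_add ht0, Real.rpow_one]
  have hmq : Measurable fun s => 2 * (‖F t - F s‖₊ : ℝ≥0∞) ^ 2 * cc t :=
    ((measurable_const.mul (((stronglyMeasurable_const.sub hFm).enorm).pow_const 2))).mul_const _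
  calc Df F t * ww t = (Df F t * ENNReal.ofReal (15 * t)) * cc t := h2
    _ = (∫⁻ _ in Ioc t (16 * t), Df F t) * cc t := by rw [h0]
    _ ≤ (∫⁻ s in Ioc t (16 * t), (2 * (‖F t - F s‖₊ : ℝ≥0∞) ^ 2 + 2 * Df F s)) * cc t :=
        mul_le_mul_left h1 _
    _ = ∫⁻ s in Ioc t (16 * t), (2 * (‖F t - F s‖₊ : ℝ≥0∞) ^ 2 + 2 * Df F s) * cc t :=
        (lintegral_mul_const' _ _ cc_ne_top).symm
    _ = ∫⁻ s in Ioc t (16 * t),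
          (2 * (‖F t - F s‖₊ : ℝ≥0∞) ^ 2 * cc t + 2 * Df F s * cc t) := by
        apply lintegral_congr; intro s; ring
    _ = (∫⁻ s in Ioc t (16 * t), 2 * (‖F t - F s‖₊ : ℝ≥0∞) ^ 2 * cc t)
          + ∫⁻ s in Ioc t (16 * t), 2 * Df F s * cc t :=
        lintegral_add_left hmq _
    _ = (∫⁻ s, q1 F t s) + ∫⁻ s, q2 F t s := by
        rw [← lintegral_indicator measurableSet_Ioc, ← lintegral_indicator measurableSet_Ioc]
        congr 1 <;> apply lintegral_congr <;> intro s <;>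
          simp only [indicator_apply, mem_Ioc, q1, q2]

/-- the `A` estimate -/
private lemma stepA {F : ℝ → H} {ε : ℝ} (hε : 0 < ε) :
    ∫⁻ t in Ioi ε, ∫⁻ s, q1 F t s
      ≤ ENNReal.ofReal (2 * 15 ^ ((1:ℝ)/2)) * sobQuarterSq F := by
  have hb : ∀ t ∈ Ioi ε, ∀ s, q1 F t s
      ≤ ENNReal.ofReal (2 * 15 ^ ((1:ℝ)/2)) * ((‖F t - F s‖₊ : ℝ≥0∞) ^ 2 / kk t s) := by
    intro t ht s
    unfold q1
    split_ifs with hc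
    · have ht0 : 0 < t := hε.trans ht
      have hst : 0 < s - t := by linarith [hc.1]
      have habs : |t - s| = s - t := by rw [abs_sub_comm]; exact abs_of_pos hst
      have hk1 : kk t s = ENNReal.ofReal ((s - t) ^ ((3:ℝ)/2)) := by
        unfold kk; rw [habs, ← ENNReal.ofReal_rpow_of_pos hst]
      have hckb : cc t * kk t s ≤ ENNReal.ofReal (15 ^ ((1:ℝ)/2)) := by
        rw [hk1]
        unfold cc
        rw [← ENNReal.ofReal_mul (by positivity)]
        apply ENNReal.ofReal_le_ofReal
        have h1 : s - t ≤ 15 * t := by linarith [hc.2]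
        have h2 : (s - t) ^ ((3:ℝ)/2) ≤ (15 * t) ^ ((3:ℝ)/2) :=
          Real.rpow_le_rpow hst.le h1 (by norm_num)
        have h3 : (15 * t) ^ ((3:ℝ)/2) = 15 ^ ((3:ℝ)/2) * t ^ ((3:ℝ)/2) :=
          Real.mul_rpow (by norm_num) ht0.le
        have ht' : t ^ (-3/2 : ℝ) * t ^ ((3:ℝ)/2) = 1 := by
          rw [← Real.rpow_add ht0]; norm_num
        have h15 : (15:ℝ)⁻¹ * 15 ^ ((3:ℝ)/2) = 15 ^ ((1:ℝ)/2) := by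
          rw [← Real.rpow_neg_one, ← Real.rpow_add (by norm_num)]; norm_num
        calc 15⁻¹ * t ^ (-3/2 : ℝ) * (s - t) ^ ((3:ℝ)/2)
            ≤ 15⁻¹ * t ^ (-3/2 : ℝ) * (15 ^ ((3:ℝ)/2) * t ^ ((3:ℝ)/2)) := by
              have hnn : (0:ℝ) ≤ 15⁻¹ * t ^ (-3/2 : ℝ) := by positivity
              exact mul_le_mul_of_nonneg_left (h2.trans_eq h3) hnn
          _ = (15⁻¹ * 15 ^ ((3:ℝ)/2)) * (t ^ (-3/2 : ℝ) * t ^ ((3:ℝ)/2)) := by ring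
          _ = 15 ^ ((1:ℝ)/2) := by rw [ht', h15, mul_one]
      have hkne : kk t s ≠ 0 := by
        rw [hk1]
        exact (ENNReal.ofReal_pos.mpr (by positivity)).ne'
      calc 2 * (‖F t - F s‖₊ : ℝ≥0∞) ^ 2 * cc t
          = 2 * ((‖F t - F s‖₊ : ℝ≥0∞) ^ 2 / kk t s * kk t s) * cc t := by
            rw [ENNReal.div_mul_cancel hkne kk_ne_top]
        _ = (2 * ((‖F t - F s‖₊ : ℝ≥0∞) ^ 2 / kk t s)) * (cc t * kk t s) := by ring
        _ ≤ (2 * ((‖F t - F s‖₊ : ℝ≥0∞) ^ 2 / kk t s)) * ENNReal.ofReal (15 ^ ((1:ℝ)/2)) :=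
            mul_le_mul_right hckb _
        _ = ENNReal.ofReal (2 * 15 ^ ((1:ℝ)/2)) * ((‖F t - F s‖₊ : ℝ≥0∞) ^ 2 / kk t s) := by
            rw [ENNReal.ofReal_mul (by norm_num), ENNReal.ofReal_ofNat]; ring
    · exact zero_le
  calc ∫⁻ t in Ioi ε, ∫⁻ s, q1 F t s
      ≤ ∫⁻ t in Ioi ε, ENNReal.ofReal (2 * 15 ^ ((1:ℝ)/2))
          * ∫⁻ s, (‖F t - F s‖₊ : ℝ≥0∞) ^ 2 / kk t s := by
        refine setLIntegral_mono' measurableSet_Ioi (fun t ht => ?_)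
        rw [← lintegral_const_mul' _ _ ENNReal.ofReal_ne_top]
        exact lintegral_mono (hb t ht)
    _ = ENNReal.ofReal (2 * 15 ^ ((1:ℝ)/2))
          * ∫⁻ t in Ioi ε, ∫⁻ s, (‖F t - F s‖₊ : ℝ≥0∞) ^ 2 / kk t s :=
        lintegral_const_mul' _ _ ENNReal.ofReal_ne_top
    _ ≤ ENNReal.ofReal (2 * 15 ^ ((1:ℝ)/2)) * sobQuarterSq F := by
        rw [sob_eq]
        exact mul_le_mul_right (setLIntegral_le_lintegral _ _) _

/-- the `B` estimate -/
private lemma stepB {F : ℝ → H} (hFm : StronglyMeasurable F) {ε : ℝ} (hε : 0 < ε) :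
    ∫⁻ t in Ioi ε, ∫⁻ s, q2 F t s
      ≤ ENNReal.ofReal (4/5) * ∫⁻ t in Ioi ε, Df F t * ww t := by
  set φ : ℝ → ℝ → ℝ≥0∞ :=
    fun t s => if ε < t ∧ t < s ∧ s ≤ 16 * t then 2 * Df F s * cc t else 0 with hφ
  have hφm : Measurable (Function.uncurry φ) := by
    have hset : MeasurableSet {p : ℝ × ℝ | ε < p.1 ∧ p.1 < p.2 ∧ p.2 ≤ 16 * p.1} := by
      refine (measurableSet_lt measurable_const measurable_fst).inter
        ((measurableSet_lt measurable_fst measurable_snd).inter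
          (measurableSet_le measurable_snd (measurable_fst.const_mul 16)))
    exact Measurable.ite hset
      ((measurable_const.mul ((meas_Df hFm).comp measurable_snd)).mul
        (meas_cc.comp measurable_fst)) measurable_const
  have h1 : ∫⁻ t in Ioi ε, ∫⁻ s, q2 F t s = ∫⁻ t, ∫⁻ s, φ t s := by
    rw [← lintegral_indicator measurableSet_Ioi]
    apply lintegral_congr
    intro t
    rw [indicator_apply]
    split_ifs with ht
    · apply lintegral_congr; intro s
      have ht' : ε < t := ht
      by_cases hc : t < s ∧ s ≤ 16 * t <;> simp [q2, hφ, hc, ht']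
    · have hz : ∀ s, φ t s = 0 := fun s => if_neg (by
        rintro ⟨hh, -⟩; exact ht (mem_Ioi.mpr hh))
      simp [hz]
  have h2 : ∀ s, ∫⁻ t, φ t s
      ≤ (Ioi ε).indicator (fun s => ENNReal.ofReal (4/5) * (Df F s * ww s)) s := by
    intro s
    by_cases hs : ε < s
    · have hs0 : 0 < s := hε.trans hs
      have hsub : ∀ t, φ t s ≤ (Icc (s/16) s).indicator (fun t => 2 * Df F s * cc t) t := by
        intro t
        simp only [hφ]
        split_ifs with hcond
        · rw [indicator_of_mem (mem_Icc.mpr ⟨by linarith [hcond.2.2], le_of_lt hcond.2.1⟩)]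
        · exact zero_le
      have hconst : (2 : ℝ≥0∞) * Df F s ≠ ∞ :=
        ENNReal.mul_ne_top (by norm_num) (by
          unfold Df; exact ENNReal.pow_ne_top ENNReal.coe_ne_top)
      calc ∫⁻ t, φ t s ≤ ∫⁻ t, (Icc (s/16) s).indicator (fun t => 2 * Df F s * cc t) t :=
            lintegral_mono hsub
        _ = ∫⁻ t in Icc (s/16) s, 2 * Df F s * cc t :=
            lintegral_indicator measurableSet_Icc _
        _ = 2 * Df F s * ∫⁻ t in Icc (s/16) s, cc t := by
            rw [lintegral_const_mul' _ _ hconst]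
        _ = 2 * Df F s * ENNReal.ofReal (2/5 * s ^ (-1/2 : ℝ)) := by
            rw [show (fun t => cc t) = fun t => ENNReal.ofReal (15⁻¹ * t ^ (-3/2 : ℝ)) from rfl,
              icc_c_integral hs0]
        _ = ENNReal.ofReal (4/5) * (Df F s * ww s) := by
            unfold ww
            rw [ENNReal.ofReal_mul (by norm_num),
              show (4/5 : ℝ) = 2 * (2/5) by norm_num,
              ENNReal.ofReal_mul (by norm_num), ENNReal.ofReal_ofNat]
            ring
        _ = (Ioi ε).indicator (fun s => ENNReal.ofReal (4/5) * (Df F s * ww s)) s := by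
            rw [indicator_of_mem (mem_Ioi.mpr hs)]
    · have hz : ∀ t, φ t s = 0 := fun t => if_neg (by
        rintro ⟨hh1, hh2, -⟩; exact hs (hh1.trans hh2))
      simp [hz]
  calc ∫⁻ t in Ioi ε, ∫⁻ s, q2 F t s = ∫⁻ t, ∫⁻ s, φ t s := h1
    _ = ∫⁻ s, ∫⁻ t, φ t s := lintegral_lintegral_swap hφm.aemeasurable
    _ ≤ ∫⁻ s, (Ioi ε).indicator (fun s => ENNReal.ofReal (4/5) * (Df F s * ww s)) s :=
        lintegral_mono h2
    _ = ∫⁻ s in Ioi ε, ENNReal.ofReal (4/5) * (Df F s * ww s) :=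
        lintegral_indicator measurableSet_Ioi _
    _ = ENNReal.ofReal (4/5) * ∫⁻ s in Ioi ε, Df F s * ww s :=
        lintegral_const_mul' _ _ ENNReal.ofReal_ne_top

/-- the Hardy-type inequality -/
private lemma hardy {F : ℝ → H} (hFm : StronglyMeasurable F)
    (hF2 : (∫⁻ t, (‖F t‖₊ : ℝ≥0∞) ^ 2) ≠ ∞) (hS : sobQuarterSq F ≠ ∞) :
    ∫⁻ t in Ioi (0:ℝ), Df F t * ww t
      ≤ ENNReal.ofReal (10 * 15 ^ ((1:ℝ)/2)) * sobQuarterSq F := by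
  have hDm := meas_Df hFm
  have hwm : Measurable ww := by unfold ww; fun_prop
  have hkey : ∀ ε : ℝ, 0 < ε →
      ∫⁻ t in Ioi ε, Df F t * ww t
        ≤ ENNReal.ofReal (10 * 15 ^ ((1:ℝ)/2)) * sobQuarterSq F := by
    intro ε hε
    set Iε := ∫⁻ t in Ioi ε, Df F t * ww t with hIεdef
    have hIfin : Iε ≠ ∞ := by
      have hle : Iε ≤ ∫⁻ t in Ioi ε, Df F t * ENNReal.ofReal (ε ^ (-1/2 : ℝ)) := by
        refine setLIntegral_mono' measurableSet_Ioi (fun t ht => ?_)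
        exact mul_le_mul_right (ENNReal.ofReal_le_ofReal
          (Real.rpow_le_rpow_of_nonpos hε (le_of_lt ht) (by norm_num))) _
      refine ne_top_of_le_ne_top ?_ hle
      rw [lintegral_mul_const' _ _ ENNReal.ofReal_ne_top]
      exact ENNReal.mul_ne_top (ne_top_of_le_ne_top hF2 (setLIntegral_le_lintegral _ _))
        ENNReal.ofReal_ne_top
    have hq1m : Measurable fun t => ∫⁻ s, q1 F t s := by
      have hu : Measurable (fun p : ℝ × ℝ => q1 F p.1 p.2) := by
        have hset : MeasurableSet {p : ℝ × ℝ | p.1 < p.2 ∧ p.2 ≤ 16 * p.1} :=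
          (measurableSet_lt measurable_fst measurable_snd).inter
            (measurableSet_le measurable_snd (measurable_fst.const_mul 16))
        exact Measurable.ite hset
          ((measurable_const.mul (meas_dsq hFm)).mul (meas_cc.comp measurable_fst))
          measurable_const
      exact hu.lintegral_prod_right'
    have hmain : Iε ≤ ENNReal.ofReal (2 * 15 ^ ((1:ℝ)/2)) * sobQuarterSq F
        + ENNReal.ofReal (4/5) * Iε := by
      calc Iε ≤ ∫⁻ t in Ioi ε, ((∫⁻ s, q1 F t s) + ∫⁻ s, q2 F t s) :=
          setLIntegral_mono' measurableSet_Ioi (fun t ht => step_pt hFm hε ht)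
        _ = (∫⁻ t in Ioi ε, ∫⁻ s, q1 F t s) + ∫⁻ t in Ioi ε, ∫⁻ s, q2 F t s :=
          lintegral_add_left hq1m _
        _ ≤ _ := add_le_add (stepA hε) (stepB hFm hε)
    have hsplit : Iε = ENNReal.ofReal (1/5) * Iε + ENNReal.ofReal (4/5) * Iε := by
      rw [← add_mul, ← ENNReal.ofReal_add (by norm_num) (by norm_num)]
      norm_num
    have h45top : ENNReal.ofReal (4/5) * Iε ≠ ∞ :=
      ENNReal.mul_ne_top ENNReal.ofReal_ne_top hIfin
    have habs : ENNReal.ofReal (1/5) * Iε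
        ≤ ENNReal.ofReal (2 * 15 ^ ((1:ℝ)/2)) * sobQuarterSq F :=
      (ENNReal.add_le_add_iff_right h45top).mp (hsplit ▸ hmain)
    calc Iε = ENNReal.ofReal 5 * (ENNReal.ofReal (1/5) * Iε) := by
          rw [← mul_assoc, ← ENNReal.ofReal_mul (by norm_num)]
          norm_num
      _ ≤ ENNReal.ofReal 5 * (ENNReal.ofReal (2 * 15 ^ ((1:ℝ)/2)) * sobQuarterSq F) :=
          mul_le_mul_right habs _
      _ = ENNReal.ofReal (10 * 15 ^ ((1:ℝ)/2)) * sobQuarterSq F := by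
          rw [← mul_assoc, ← ENNReal.ofReal_mul (by norm_num)]
          norm_num
          congr 1
          ring
  have hgm : Measurable fun t => Df F t * ww t := hDm.mul hwm
  have hsup : ∀ t, (Ioi (0:ℝ)).indicator (fun t => Df F t * ww t) t
      = ⨆ n : ℕ, (Ioi (1 / ((n:ℝ) + 1))).indicator (fun t => Df F t * ww t) t := by
    intro t
    rcases le_or_gt t 0 with ht | ht
    · rw [indicator_of_notMem (by simpa using not_lt.mpr ht)]
      symm
      have hz : ∀ n : ℕ, (Ioi (1 / ((n:ℝ) + 1))).indicator (fun t => Df F t * ww t) t = 0 := by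
        intro n
        refine indicator_of_notMem ?_ _
        simp only [mem_Ioi, not_lt]
        have h1 : (0:ℝ) < 1 / ((n:ℝ) + 1) := by positivity
        linarith
      simp only [hz, iSup_const]
    · rw [indicator_of_mem (mem_Ioi.mpr ht)]
      refine le_antisymm ?_ (iSup_le fun n => Set.indicator_le_self _ _ t)
      obtain ⟨n, hn⟩ := exists_nat_one_div_lt ht
      calc Df F t * ww t
          = (Ioi (1 / ((n:ℝ) + 1))).indicator (fun t => Df F t * ww t) t :=
            (indicator_of_mem (mem_Ioi.mpr hn) (fun t => Df F t * ww t)).symm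
        _ ≤ _ := le_iSup
            (fun n : ℕ => (Ioi (1 / ((n:ℝ) + 1))).indicator (fun t => Df F t * ww t) t) n
  have hmono : Monotone fun n : ℕ =>
      fun t => (Ioi (1 / ((n:ℝ) + 1))).indicator (fun t => Df F t * ww t) t := by
    refine monotone_nat_of_le_succ fun n => ?_
    refine Set.indicator_le_indicator_of_subset (Ioi_subset_Ioi ?_) (fun a => zero_le)
    apply one_div_le_one_div_of_le (by positivity)
    push_cast
    linarith
  calc ∫⁻ t in Ioi (0:ℝ), Df F t * ww t
      = ∫⁻ t, (Ioi (0:ℝ)).indicator (fun t => Df F t * ww t) t :=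
        (lintegral_indicator measurableSet_Ioi _).symm
    _ = ∫⁻ t, ⨆ n : ℕ, (Ioi (1 / ((n:ℝ) + 1))).indicator (fun t => Df F t * ww t) t :=
        lintegral_congr hsup
    _ = ⨆ n : ℕ, ∫⁻ t, (Ioi (1 / ((n:ℝ) + 1))).indicator (fun t => Df F t * ww t) t :=
        lintegral_iSup (fun n => hgm.indicator measurableSet_Ioi) hmono
    _ ≤ ENNReal.ofReal (10 * 15 ^ ((1:ℝ)/2)) * sobQuarterSq F := by
        refine iSup_le fun n => ?_
        rw [lintegral_indicator measurableSet_Ioi]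
        exact hkey _ (by positivity)

private lemma inner_iio {F : ℝ → H} {t : ℝ} (ht : 0 < t) :
    ∫⁻ s in Iio (0:ℝ), Df F t / kk t s = Df F t * ENNReal.ofReal (2 * t ^ (-1/2 : ℝ)) := by
  have hDtop : Df F t ≠ ∞ := by unfold Df; exact ENNReal.pow_ne_top ENNReal.coe_ne_top
  have h1 : ∫⁻ s in Iio (0:ℝ), Df F t / kk t s
      = Df F t * ∫⁻ s in Iio (0:ℝ), (kk t s)⁻¹ := by
    simp_rw [div_eq_mul_inv]
    exact lintegral_const_mul' _ _ hDtop
  rw [h1]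
  congr 1
  have e1 : ∫⁻ s in Iio (0:ℝ), (kk t s)⁻¹
      = ∫⁻ s in Iio (0:ℝ), ((ENNReal.ofReal (t - s)) ^ ((3:ℝ)/2))⁻¹ := by
    refine setLIntegral_congr_fun measurableSet_Iio (fun s hs => ?_)
    unfold kk
    rw [abs_of_pos (by simp only [mem_Iio] at hs; linarith : (0:ℝ) < t - s)]
  rw [e1]
  have e2 : ∫⁻ s in Iio (0:ℝ), ((ENNReal.ofReal (t - s)) ^ ((3:ℝ)/2))⁻¹
      = ∫⁻ u in Ioi t, ((ENNReal.ofReal u) ^ ((3:ℝ)/2))⁻¹ := by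
    have hcv := (Measure.measurePreserving_sub_left volume t).setLIntegral_comp_emb
      (Homeomorph.subLeft t).measurableEmbedding
      (fun u => ((ENNReal.ofReal u) ^ ((3:ℝ)/2))⁻¹) (Iio 0)
    rw [show (fun x : ℝ => t - x) '' Iio 0 = Ioi t from ?_] at hcv
    · exact hcv
    · ext u
      simp only [mem_image, mem_Iio, mem_Ioi]
      constructor
      · rintro ⟨s, hs, rfl⟩; linarith
      · intro hu; exact ⟨t - u, by linarith, by ring⟩
  rw [e2]
  have e3 : ∫⁻ u in Ioi t, ((ENNReal.ofReal u) ^ ((3:ℝ)/2))⁻¹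
      = ∫⁻ u in Ioi t, ENNReal.ofReal (u ^ (-3/2 : ℝ)) := by
    refine setLIntegral_congr_fun measurableSet_Ioi (fun u hu => ?_)
    have hu0 : 0 < u := ht.trans hu
    rw [ENNReal.ofReal_rpow_of_pos hu0,
      ← ENNReal.ofReal_inv_of_pos (Real.rpow_pos_of_pos hu0 _)]
    congr 1
    rw [show (-3/2 : ℝ) = -(3/2) by norm_num, Real.rpow_neg hu0.le]
  rw [e3,
    ← ofReal_integral_eq_lintegral_ofReal (integrableOn_Ioi_rpow_of_lt (by norm_num) ht)
      ((ae_restrict_iff' measurableSet_Ioi).2 (ae_of_all _ fun u hu =>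
        Real.rpow_nonneg (le_of_lt (ht.trans hu)) _)),
    integral_Ioi_rpow_of_lt (by norm_num) ht]
  congr 1
  rw [show (-3/2 + 1 : ℝ) = -1/2 by norm_num]
  ring

set_option maxHeartbeats 2000000 in
private lemma main {F : ℝ → H} (hFm : StronglyMeasurable F)
    (hF2 : (∫⁻ t, (‖F t‖₊ : ℝ≥0∞) ^ 2) ≠ ∞) (hS : sobQuarterSq F ≠ ∞) :
    sobQuarterSq (fun t => if 0 ≤ t then F t else 0)
      ≤ (1 + ENNReal.ofReal (40 * 15 ^ ((1:ℝ)/2))) * sobQuarterSq F := by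
  classical
  set G : ℝ → H := fun t => if 0 ≤ t then F t else 0 with hG
  set p : ℝ → ℝ → ℝ≥0∞ :=
    fun t s => if 0 ≤ t ∧ s < 0 then Df F t / kk t s else 0 with hp
  set p' : ℝ → ℝ → ℝ≥0∞ :=
    fun t s => if t < 0 ∧ 0 ≤ s then Df F s / kk t s else 0 with hp'
  have hsplit : ∀ t s : ℝ, (‖G t - G s‖₊ : ℝ≥0∞) ^ 2 / kk t s
      ≤ (‖F t - F s‖₊ : ℝ≥0∞) ^ 2 / kk t s + p t s + p' t s := by
    intro t s
    by_cases ht : 0 ≤ t <;> by_cases hs : 0 ≤ s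
    · have hGt : G t = F t := by simp only [hG]; rw [if_pos ht]
      have hGs : G s = F s := by simp only [hG]; rw [if_pos hs]
      rw [hGt, hGs]
      exact le_add_right (le_add_right le_rfl)
    · have hGt : G t = F t := by simp only [hG]; rw [if_pos ht]
      have hGs : G s = 0 := by simp only [hG]; rw [if_neg hs]
      rw [hGt, hGs, sub_zero]
      have hpe : (‖F t‖₊ : ℝ≥0∞) ^ 2 / kk t s = p t s := by
        simp only [hp]
        rw [if_pos (show 0 ≤ t ∧ s < 0 from ⟨ht, not_le.mp hs⟩)]
        rfl
      rw [hpe]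
      exact le_add_right (le_add_left le_rfl)
    · have hGt : G t = 0 := by simp only [hG]; rw [if_neg ht]
      have hGs : G s = F s := by simp only [hG]; rw [if_pos hs]
      rw [hGt, hGs, zero_sub, nnnorm_neg]
      have hpe : (‖F s‖₊ : ℝ≥0∞) ^ 2 / kk t s = p' t s := by
        simp only [hp']
        rw [if_pos (show t < 0 ∧ 0 ≤ s from ⟨not_le.mp ht, hs⟩)]
        rfl
      rw [hpe]
      exact le_add_left le_rfl
    · have hGt : G t = 0 := by simp only [hG]; rw [if_neg ht]
      have hGs : G s = 0 := by simp only [hG]; rw [if_neg hs]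
      rw [hGt, hGs, sub_zero, nnnorm_zero]
      simp only [ENNReal.coe_zero, ne_eq, OfNat.ofNat_ne_zero, not_false_eq_true, zero_pow,
        ENNReal.zero_div]
      exact zero_le
  have hpm : Measurable (fun q : ℝ × ℝ => p q.1 q.2) := by
    refine Measurable.ite ?_ (((meas_Df hFm).comp measurable_fst).div meas_kk) measurable_const
    exact (measurableSet_le measurable_const measurable_fst).inter
      (measurableSet_lt measurable_snd measurable_const)
  have hp'm : Measurable (fun q : ℝ × ℝ => p' q.1 q.2) := by
    refine Measurable.ite ?_ (((meas_Df hFm).comp measurable_snd).div meas_kk) measurable_const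
    exact (measurableSet_lt measurable_fst measurable_const).inter
      (measurableSet_le measurable_const measurable_snd)
  have hfm : Measurable (fun q : ℝ × ℝ => (‖F q.1 - F q.2‖₊ : ℝ≥0∞) ^ 2 / kk q.1 q.2) :=
    (meas_dsq hFm).div meas_kk
  have hstep1 : sobQuarterSq G ≤ sobQuarterSq F
      + (∫⁻ t, ∫⁻ s, p t s) + (∫⁻ t, ∫⁻ s, p' t s) := by
    rw [sob_eq G, sob_eq F]
    calc ∫⁻ t, ∫⁻ s, (‖G t - G s‖₊ : ℝ≥0∞) ^ 2 / kk t s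
        ≤ ∫⁻ t, ∫⁻ s, ((‖F t - F s‖₊ : ℝ≥0∞) ^ 2 / kk t s + p t s + p' t s) :=
          lintegral_mono fun t => lintegral_mono fun s => hsplit t s
      _ = ∫⁻ t, ((∫⁻ s, (‖F t - F s‖₊ : ℝ≥0∞) ^ 2 / kk t s)
            + (∫⁻ s, p t s) + ∫⁻ s, p' t s) := by
          refine lintegral_congr fun t => ?_
          have hfs : Measurable fun s => (‖F t - F s‖₊ : ℝ≥0∞) ^ 2 / kk t s :=
            hfm.comp measurable_prodMk_left
          have hps : Measurable fun s => p t s := hpm.comp measurable_prodMk_left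
          rw [lintegral_add_left (f := fun s => (‖F t - F s‖₊ : ℝ≥0∞) ^ 2 / kk t s + p t s) (hfs.add hps),
            lintegral_add_left hfs]
      _ = _ := by
          have hA : Measurable fun t => ∫⁻ s, (‖F t - F s‖₊ : ℝ≥0∞) ^ 2 / kk t s :=
            hfm.lintegral_prod_right'
          have hB : Measurable fun t => ∫⁻ s, p t s := hpm.lintegral_prod_right'
          rw [lintegral_add_left (f := fun t => (∫⁻ s, (‖F t - F s‖₊ : ℝ≥0∞) ^ 2 / kk t s)
              + ∫⁻ s, p t s) (hA.add hB), lintegral_add_left hA]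
  have hM : (∫⁻ t, ∫⁻ s, p t s) = 2 * ∫⁻ t in Ioi (0:ℝ), Df F t * ww t := by
    have hae : ∀ᵐ t : ℝ, t ≠ (0:ℝ) := by
      filter_upwards [compl_mem_ae_iff.mpr (measure_singleton (0:ℝ))] with t ht
      simpa using ht
    have h1 : ∫⁻ t, ∫⁻ s, p t s
        = ∫⁻ t, (Ioi (0:ℝ)).indicator
            (fun t => Df F t * ENNReal.ofReal (2 * t ^ (-1/2:ℝ))) t := by
      refine lintegral_congr_ae ?_
      filter_upwards [hae] with t ht0
      rcases lt_or_gt_of_ne ht0 with htneg | htpos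
      · have hz : ∀ s, p t s = 0 := fun s => if_neg (by
          rintro ⟨hh, -⟩; exact absurd hh (not_le.mpr htneg))
        rw [indicator_of_notMem (by simpa using not_lt.mpr htneg.le)]
        simp [hz]
      · rw [indicator_of_mem (mem_Ioi.mpr htpos)]
        have hpeq : ∀ s, p t s = (Iio (0:ℝ)).indicator (fun s => Df F t / kk t s) s := by
          intro s
          simp only [hp]
          by_cases hs : s < 0
          · rw [if_pos ⟨htpos.le, hs⟩, indicator_of_mem (mem_Iio.mpr hs)]
          · rw [if_neg (by tauto), indicator_of_notMem (by simpa using hs)]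
        calc ∫⁻ s, p t s = ∫⁻ s in Iio (0:ℝ), Df F t / kk t s := by
              rw [lintegral_congr hpeq, lintegral_indicator measurableSet_Iio]
          _ = Df F t * ENNReal.ofReal (2 * t ^ (-1/2:ℝ)) := inner_iio htpos
    rw [h1, lintegral_indicator measurableSet_Ioi]
    calc ∫⁻ t in Ioi (0:ℝ), Df F t * ENNReal.ofReal (2 * t ^ (-1/2:ℝ))
        = ∫⁻ t in Ioi (0:ℝ), 2 * (Df F t * ww t) := by
          refine lintegral_congr fun t => ?_
          unfold ww
          rw [ENNReal.ofReal_mul (by norm_num), ENNReal.ofReal_ofNat]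
          ring
      _ = 2 * ∫⁻ t in Ioi (0:ℝ), Df F t * ww t :=
          lintegral_const_mul' _ _ (by norm_num)
  have hM' : (∫⁻ t, ∫⁻ s, p' t s) = ∫⁻ t, ∫⁻ s, p t s := by
    rw [lintegral_lintegral_swap hp'm.aemeasurable]
    refine lintegral_congr fun a => lintegral_congr fun b => ?_
    simp only [hp, hp']
    rw [show kk b a = kk a b from by unfold kk; rw [abs_sub_comm]]
    exact if_congr and_comm rfl rfl
  have hhardy := hardy hFm hF2 hS
  calc sobQuarterSq G
      ≤ sobQuarterSq F + (∫⁻ t, ∫⁻ s, p t s) + (∫⁻ t, ∫⁻ s, p' t s) := hstep1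
    _ = sobQuarterSq F + 2 * (∫⁻ t in Ioi (0:ℝ), Df F t * ww t)
        + 2 * (∫⁻ t in Ioi (0:ℝ), Df F t * ww t) := by rw [hM', hM]
    _ ≤ sobQuarterSq F
        + 2 * (ENNReal.ofReal (10 * 15 ^ ((1:ℝ)/2)) * sobQuarterSq F)
        + 2 * (ENNReal.ofReal (10 * 15 ^ ((1:ℝ)/2)) * sobQuarterSq F) :=
        add_le_add (add_le_add le_rfl (mul_le_mul_right hhardy 2)) (mul_le_mul_right hhardy 2)
    _ = (1 + ENNReal.ofReal (40 * 15 ^ ((1:ℝ)/2))) * sobQuarterSq F := by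
        rw [add_mul, one_mul]
        rw [add_assoc]
        congr 1
        have h4 : (2:ℝ≥0∞) * (ENNReal.ofReal (10 * 15 ^ ((1:ℝ)/2)) * sobQuarterSq F)
            + 2 * (ENNReal.ofReal (10 * 15 ^ ((1:ℝ)/2)) * sobQuarterSq F)
            = (4 * ENNReal.ofReal (10 * 15 ^ ((1:ℝ)/2))) * sobQuarterSq F := by ring
        rw [h4]
        congr 1
        rw [show (4:ℝ≥0∞) = ENNReal.ofReal (4:ℝ) from by
            rw [ENNReal.ofReal_ofNat],
          ← ENNReal.ofReal_mul (by norm_num)]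
        congr 1
        ring

end Statement10Proof

/-- Multiplication by the Heaviside function `h = 1_{[0,∞)}` is bounded
on `Ḣ^{1/4}(ℝ; H) ∩ L²(ℝ; H)`: if `F ∈ L²(ℝ,H)` and `|∂_t|^{1/4}F ∈ L²(ℝ,H)` (i.e. the
`Ḣ^{1/4}` seminorm of `F` is finite), then
`‖|∂_t|^{1/4}(hF)‖_{L²(ℝ,H)} ≲ ‖|∂_t|^{1/4}F‖_{L²(ℝ,H)}`. -/
theorem statement10 {H : Type*} [NormedAddCommGroup H] [NormedSpace ℝ H] :
    ∃ C : ℝ≥0∞, C ≠ ∞ ∧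
    ∀ F : ℝ → H, MemLp F 2 (volume : Measure ℝ) → sobQuarterSq F ≠ ∞ →
      sobQuarterSq (fun t => if 0 ≤ t then F t else 0) ≤ C * sobQuarterSq F := by
  classical
  refine ⟨1 + ENNReal.ofReal (40 * 15 ^ ((1:ℝ)/2)),
    ENNReal.add_ne_top.mpr ⟨ENNReal.one_ne_top, ENNReal.ofReal_ne_top⟩, ?_⟩
  intro F hMem hS
  obtain ⟨hFsm, hFnorm⟩ := hMem
  set G : ℝ → H := hFsm.mk F with hGdef
  have hGsm : StronglyMeasurable G := hFsm.stronglyMeasurable_mk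
  have hFG : F =ᵐ[volume] G := hFsm.ae_eq_mk
  have hMemG : MemLp G 2 volume := MemLp.ae_eq hFG ⟨hFsm, hFnorm⟩
  have hcongr1 : sobQuarterSq F = sobQuarterSq G := Statement10Proof.sobQuarterSq_congr hFG
  have hSG : sobQuarterSq G ≠ ∞ := hcongr1 ▸ hS
  have hG2 : (∫⁻ t, (‖G t‖₊ : ℝ≥0∞) ^ 2) ≠ ∞ := by
    have h := hMemG.2
    rw [eLpNorm_eq_lintegral_rpow_enorm_toReal (by norm_num) (by norm_num)] at h
    simp only [ENNReal.toReal_ofNat] at h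
    have h2 : (∫⁻ x, (‖G x‖₊ : ℝ≥0∞) ^ (2:ℝ)) < ∞ :=
      (ENNReal.rpow_lt_top_iff_of_pos (by norm_num)).mp h
    have h3 : (fun x => (‖G x‖₊ : ℝ≥0∞) ^ (2:ℝ)) = fun x => (‖G x‖₊ : ℝ≥0∞) ^ (2:ℕ) := by
      funext x
      rw [← ENNReal.rpow_natCast]
      norm_num
    rw [h3] at h2
    exact h2.ne
  have hcongr2 : sobQuarterSq (fun t => if 0 ≤ t then F t else 0)
      = sobQuarterSq (fun t => if 0 ≤ t then G t else 0) := by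
    refine Statement10Proof.sobQuarterSq_congr ?_
    filter_upwards [hFG] with t ht
    simp only [ht]
  rw [hcongr2, hcongr1]
  exact Statement10Proof.main hGsm hG2 hSG
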